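/- For any two starting configurations σ_0, σ'_0 there exists a coupling (σ_t, σ'_t)_{t≥0} of the Glauber dynamics started from (σ_0, σ'_0) such that for every t ≥ 0 the vector of expected block Hamming distances satisfies, componentwise, (E dist(σ_t^{(1)},σ'_t^{(1)}), …, E dist(σ_t^{(m)},σ'_t^{(m)}))^T ≤ A^t (dist(σ_0^{(1)},σ'_0^{(1)}), …, dist(σ_0^{(m)},σ'_0^{(m)}))^T, where A is the m×m matrix with A_{ii} = 1 − 1/n + β (k_{ii}/n)(p_i − 1/n) and A_{ij} = β p_i k_{ij}/n for i ≠ j. -/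

import Mathlib

open Finset MeasureTheory Real Filter

namespace MultiIsing

/-- The real spin value attached to a Boolean spin. -/
def spin (b : Bool) : ℝ := if b then 1 else -1

/-- `r₊(s) = e^{βs}/(e^{βs}+e^{-βs})`. -/
noncomputable def rp (β s : ℝ) : ℝ :=
  Real.exp (β * s) / (Real.exp (β * s) + Real.exp (-(β * s)))

/-- `r₋(s) = e^{-βs}/(e^{βs}+e^{-βs})`. -/
noncomputable def rm (β s : ℝ) : ℝ :=
  Real.exp (-(β * s)) / (Real.exp (β * s) + Real.exp (-(β * s)))

variable {m : ℕ}

/-- `g : Fin n → Fin m` realizes the partition of `n` vertices into groups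
of sizes `n * p i`. -/
def IsPartition (n : ℕ) (p : Fin m → ℝ) (g : Fin n → Fin m) : Prop :=
  0 < n ∧ ∀ i, ((Finset.univ.filter fun v => g v = i).card : ℝ) = n * p i

/-- Standing hypotheses on the parameters of the multi-component Ising model. -/
structure Params (m : ℕ) (p : Fin m → ℝ) (k : Fin m → Fin m → ℝ) : Prop where
  hm : 0 < m
  hp : ∀ i, 0 < p i
  hpsum : ∑ i, p i = 1
  hkpos : ∀ i j, 0 < k i j
  hksymm : ∀ i j, k i j = k j i

/-- `a` is the (normalized, positive) Perron–Frobenius left eigenvector of the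
matrix `B = (p i * k i j)`; its eigenvalue is then necessarily
`∑ i j, a i * p i * k i j`. -/
structure PFvec (m : ℕ) (p : Fin m → ℝ) (k : Fin m → Fin m → ℝ) (a : Fin m → ℝ) : Prop where
  hpos : ∀ i, 0 < a i
  hsum : ∑ i, a i = 1
  heig : ∀ j, ∑ i, a i * (p i * k i j) = (∑ i, ∑ j, a i * (p i * k i j)) * a j

/-- The critical inverse temperature `β_cr = 1 / (∑ i j, a i * p i * k i j)`. -/
noncomputable def betaCr (p : Fin m → ℝ) (k : Fin m → Fin m → ℝ) (a : Fin m → ℝ) : ℝ :=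
  1 / (∑ i, ∑ j, a i * (p i * k i j))

/-- The mean field `S^v = ∑_{w ≠ v} K(v,w) σ(w)` at vertex `v`. -/
noncomputable def meanField (n : ℕ) (k : Fin m → Fin m → ℝ) (g : Fin n → Fin m)
    (σ : Fin n → Bool) (v : Fin n) : ℝ :=
  ∑ w ∈ Finset.univ.filter (fun w => w ≠ v), (k (g v) (g w) / n) * spin (σ w)

/-- One-step transition probabilities of the Glauber dynamics: a uniformly chosen
vertex is refreshed to `±1` with probabilities `r±(S^v)`. -/
noncomputable def glauber (n : ℕ) (β : ℝ) (k : Fin m → Fin m → ℝ) (g : Fin n → Fin m)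
    (σ σ' : Fin n → Bool) : ℝ :=
  (1 / n) * ∑ v,
    ((if σ' = Function.update σ v true then rp β (meanField n k g σ v) else 0)
      + (if σ' = Function.update σ v false then rm β (meanField n k g σ v) else 0))

/-- `t`-step transition probabilities of a transition kernel on a finite state space. -/
noncomputable def iter {Ω : Type*} [Fintype Ω] [DecidableEq Ω] (P : Ω → Ω → ℝ) :
    ℕ → Ω → Ω → ℝ
  | 0 => fun x y => if x = y then 1 else 0
  | (t + 1) => fun x y => ∑ z, iter P t x z * P z y

/-- The Gibbs measure `μ_n(σ) ∝ exp(β ∑_{unordered pairs v ≠ w} K(v,w) σ(v) σ(w))`. -/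
noncomputable def gibbs (n : ℕ) (β : ℝ) (k : Fin m → Fin m → ℝ) (g : Fin n → Fin m)
    (σ : Fin n → Bool) : ℝ :=
  Real.exp (β * ((1 / 2) * ∑ v, ∑ w ∈ Finset.univ.filter (fun w => w ≠ v),
      (k (g v) (g w) / n) * spin (σ v) * spin (σ w))) /
    ∑ σ' : Fin n → Bool, Real.exp (β * ((1 / 2) * ∑ v, ∑ w ∈ Finset.univ.filter (fun w => w ≠ v),
      (k (g v) (g w) / n) * spin (σ' v) * spin (σ' w)))

/-- The total-variation distance between two distributions on a finite space. -/
noncomputable def tvDist {Ω : Type*} [Fintype Ω] (μ ν : Ω → ℝ) : ℝ :=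
  (1 / 2) * ∑ x, |μ x - ν x|

/-- The worst-case total-variation distance to stationarity after `t` steps. -/
noncomputable def dn (n : ℕ) (β : ℝ) (k : Fin m → Fin m → ℝ) (g : Fin n → Fin m)
    (t : ℕ) : ℝ :=
  ⨆ σ : Fin n → Bool, tvDist (fun σ' => iter (glauber n β k g) t σ σ') (gibbs n β k g)

/-- The total-variation mixing time `t_mix = min {t : d_n(t) ≤ 1/4}`. -/
noncomputable def tmix (n : ℕ) (β : ℝ) (k : Fin m → Fin m → ℝ) (g : Fin n → Fin m) : ℕ :=
  sInf {t : ℕ | dn n β k g t ≤ 1 / 4}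

/-- The normalized block magnetization `S^{(i)}(σ) = (1/n) ∑_{v ∈ G_i} σ(v)`. -/
noncomputable def Smag (n : ℕ) (g : Fin n → Fin m) (σ : Fin n → Bool) (i : Fin m) : ℝ :=
  (1 / n) * ∑ v ∈ Finset.univ.filter (fun v => g v = i), spin (σ v)

/-- The unnormalized block magnetization `M^{(i)}(σ) = ∑_{v ∈ G_i} σ(v)`. -/
noncomputable def Mvec (n : ℕ) (g : Fin n → Fin m) (σ : Fin n → Bool) (i : Fin m) : ℝ :=
  ∑ v ∈ Finset.univ.filter (fun v => g v = i), spin (σ v)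

/-- The `i`-th block Hamming distance between two configurations. -/
noncomputable def blockDist (n : ℕ) (g : Fin n → Fin m) (σ σ' : Fin n → Bool) (i : Fin m) : ℝ :=
  (1 / 2) * ∑ v ∈ Finset.univ.filter (fun v => g v = i), |spin (σ v) - spin (σ' v)|

/-- The matrix `Q = (1 - 1/n) I + (β/n) B` where `B = (p i * k i j)`. -/
noncomputable def Qmat (n : ℕ) (β : ℝ) (p : Fin m → ℝ) (k : Fin m → Fin m → ℝ) :
    Matrix (Fin m) (Fin m) ℝ :=
  (1 - 1 / (n : ℝ)) • (1 : Matrix (Fin m) (Fin m) ℝ) +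
    (β / n) • Matrix.of (fun i j => p i * k i j)

/-- `μ` is the law of the Markov chain with transition probabilities `P`
started at `x0`, as a measure on path space. -/
def IsPathMeasure {Ω : Type*} [Fintype Ω] [DecidableEq Ω] [MeasurableSpace Ω]
    (P : Ω → Ω → ℝ) (x0 : Ω) (μ : Measure (ℕ → Ω)) : Prop :=
  IsProbabilityMeasure μ ∧
    ∀ t : ℕ, ∀ f : ℕ → Ω,
      (μ {ω | ∀ s ≤ t, ω s = f s}).toReal =
        (if f 0 = x0 then ∏ s ∈ Finset.range t, P (f s) (f (s + 1)) else 0)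

/-- `μ` is a coupling of two copies of the Markov chain with transition
probabilities `P`, started at `x0` and `y0` respectively. -/
def IsCoupling {Ω : Type*} [Fintype Ω] [DecidableEq Ω] [MeasurableSpace Ω]
    (P : Ω → Ω → ℝ) (x0 y0 : Ω) (μ : Measure (ℕ → Ω × Ω)) : Prop :=
  IsProbabilityMeasure μ ∧
    (∀ t : ℕ, ∀ f : ℕ → Ω,
      (μ {ω | ∀ s ≤ t, (ω s).1 = f s}).toReal =
        (if f 0 = x0 then ∏ s ∈ Finset.range t, P (f s) (f (s + 1)) else 0)) ∧
    (∀ t : ℕ, ∀ f : ℕ → Ω,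
      (μ {ω | ∀ s ≤ t, (ω s).2 = f s}).toReal =
        (if f 0 = y0 then ∏ s ∈ Finset.range t, P (f s) (f (s + 1)) else 0))


lemma den_pos (x : ℝ) : 0 < Real.exp x + Real.exp (-x) := by positivity

lemma rp_nonneg (β s : ℝ) : 0 ≤ rp β s :=
  div_nonneg (Real.exp_pos _).le (den_pos _).le

lemma rp_le_one (β s : ℝ) : rp β s ≤ 1 := by
  rw [rp, div_le_one (den_pos _)]
  nlinarith [Real.exp_pos (-(β * s))]

lemma rp_add_rm (β s : ℝ) : rp β s + rm β s = 1 := by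
  rw [rp, rm, ← add_div, div_self (den_pos _).ne']

noncomputable def rf (x : ℝ) : ℝ := Real.exp x / (Real.exp x + Real.exp (-x))

lemma hasDerivAt_rf (x : ℝ) :
    HasDerivAt rf (2 / (Real.exp x + Real.exp (-x))^2) x := by
  have h1 : HasDerivAt (fun x : ℝ => Real.exp x + Real.exp (-x))
      (Real.exp x - Real.exp (-x)) x := by
    have h2 := (Real.hasDerivAt_exp (-x)).comp x (hasDerivAt_neg x)
    have := (Real.hasDerivAt_exp x).add h2
    exact this.congr_deriv (by ring)
  have h2 := (Real.hasDerivAt_exp x).div h1 (den_pos x).ne'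
  refine h2.congr_deriv ?_
  have hx : Real.exp x * Real.exp (-x) = 1 := by
    rw [← Real.exp_add]; simp
  rw [div_eq_div_iff (by positivity) (by positivity)]
  linear_combination (2 * (Real.exp x + Real.exp (-x))^2) * hx

lemma rf_lip (a b : ℝ) : |rf a - rf b| ≤ (1/2) * |a - b| := by
  have key : ∀ x ∈ Set.univ, ‖(2 : ℝ) / (Real.exp x + Real.exp (-x))^2‖ ≤ 1/2 := by
    intro x _
    have h2 : (2:ℝ) ≤ Real.exp x + Real.exp (-x) := by
      have := Real.one_le_cosh x
      rw [Real.cosh_eq] at this; linarith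
    have hpos := den_pos x
    rw [Real.norm_eq_abs, abs_of_nonneg (by positivity)]
    rw [div_le_iff₀ (by positivity)]
    nlinarith
  have := Convex.norm_image_sub_le_of_norm_hasDerivWithin_le
    (f := rf) (f' := fun x => 2 / (Real.exp x + Real.exp (-x))^2)
    (fun x _ => (hasDerivAt_rf x).hasDerivWithinAt) key convex_univ
    (Set.mem_univ b) (Set.mem_univ a)
  simpa [Real.norm_eq_abs] using this

lemma rp_lip {β : ℝ} (hβ : 0 ≤ β) (s s' : ℝ) :
    |rp β s - rp β s'| ≤ β / 2 * |s - s'| := by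
  have h : rp β s = rf (β * s) := rfl
  have h' : rp β s' = rf (β * s') := rfl
  rw [h, h']
  calc |rf (β * s) - rf (β * s')| ≤ (1/2) * |β * s - β * s'| := rf_lip _ _
    _ = β / 2 * |s - s'| := by
        rw [← mul_sub, abs_mul, abs_of_nonneg hβ]; ring


section Construction
set_option linter.unusedSectionVars false
variable {S : Type*} [Fintype S] [DecidableEq S] [MeasurableSpace S]
  [MeasurableSingletonClass S] [Nonempty S]

noncomputable def ordS : S ≃ Fin (Fintype.card S) := Fintype.equivFin S

noncomputable def cum (P : S → S → ℝ) (x y : S) : ℝ :=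
  ∑ z ∈ Finset.univ.filter (fun z => ordS z < ordS y), P x z

noncomputable def botS : S := ordS.symm ⟨0, Fintype.card_pos⟩

noncomputable def fromBits (b : S → Bool) : S :=
  ordS.symm ((insert (ordS (botS : S))
    ((Finset.univ.filter (fun y => b y = true)).image ordS)).max'
      (Finset.insert_nonempty _ _))

noncomputable def nextState (P : S → S → ℝ) (x : S) (r : ℝ) : S :=
  fromBits (fun y => decide (cum P x y ≤ r))

noncomputable def nextRem (P : S → S → ℝ) (x : S) (r : ℝ) : ℝ :=
  (r - cum P x (nextState P x r)) / P x (nextState P x r)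

variable (P : S → S → ℝ)

lemma cum_nonneg (h0 : ∀ x y, 0 ≤ P x y) (x y : S) : 0 ≤ cum P x y :=
  Finset.sum_nonneg fun z _ => h0 x z

lemma cum_bot (x : S) : cum P x (botS : S) = 0 := by
  rw [cum]
  convert Finset.sum_empty
  rw [Finset.filter_eq_empty_iff]
  intro z _
  rw [botS, Equiv.apply_symm_apply]
  simp [Fin.lt_def]

lemma cum_mono (h0 : ∀ x y, 0 ≤ P x y) (x : S) {y y' : S} (h : ordS y < ordS y') :
    cum P x y + P x y ≤ cum P x y' := by
  have hy : y ∉ Finset.univ.filter (fun z => ordS z < ordS y) := by simp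
  have hsub : insert y (Finset.univ.filter (fun z => ordS z < ordS y)) ⊆
      Finset.univ.filter (fun z => ordS z < ordS y') := by
    intro z hz
    rcases Finset.mem_insert.1 hz with rfl | hz
    · simp [h]
    · simp only [Finset.mem_filter, Finset.mem_univ, true_and] at hz ⊢
      exact hz.trans h
  calc cum P x y + P x y = ∑ z ∈ insert y (Finset.univ.filter (fun z => ordS z < ordS y)), P x z := by
        rw [Finset.sum_insert hy, cum]; ring
    _ ≤ cum P x y' := Finset.sum_le_sum_of_subset_of_nonneg hsub (fun z _ _ => h0 x z)

lemma cum_add_le_one (h0 : ∀ x y, 0 ≤ P x y) (h1 : ∀ x, ∑ y, P x y = 1) (x y : S) :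
    cum P x y + P x y ≤ 1 := by
  have hy : y ∉ Finset.univ.filter (fun z => ordS z < ordS y) := by simp
  calc cum P x y + P x y
      = ∑ z ∈ insert y (Finset.univ.filter (fun z => ordS z < ordS y)), P x z := by
        rw [Finset.sum_insert hy, cum]; ring
    _ ≤ ∑ z, P x z := Finset.sum_le_sum_of_subset_of_nonneg (Finset.subset_univ _)
        (fun z _ _ => h0 x z)
    _ = 1 := h1 x

lemma nextState_eq_iff (h0 : ∀ x y, 0 ≤ P x y) (h1 : ∀ x, ∑ y, P x y = 1)
    (x y : S) {r : ℝ} (hr0 : 0 ≤ r) (hr1 : r < 1) :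
    nextState P x r = y ↔ (cum P x y ≤ r ∧ r < cum P x y + P x y) := by
  set A := insert (ordS (botS : S))
    ((Finset.univ.filter (fun z => decide (cum P x z ≤ r) = true)).image ordS) with hA
  have hmemA : ∀ b, b ∈ A ↔ b = ordS (botS : S) ∨ ∃ z, cum P x z ≤ r ∧ ordS z = b := by
    intro b
    simp [hA, Finset.mem_insert, Finset.mem_image]
  constructor
  · rintro rfl
    have hM : A.max' (Finset.insert_nonempty _ _) ∈ A := Finset.max'_mem _ _
    have hns : ordS (nextState P x r) = A.max' (Finset.insert_nonempty _ _) := by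
      rw [nextState, fromBits, Equiv.apply_symm_apply]
    have hcle : cum P x (nextState P x r) ≤ r := by
      rcases (hmemA _).1 hM with h | ⟨z, hz, hzb⟩
      · have : nextState P x r = botS := by
          exact ordS.injective (hns.trans h)
        rw [this, cum_bot]; exact hr0
      · have : nextState P x r = z := by
          apply ordS.injective; rw [hns, ← hzb]
        rw [this]; exact hz
    refine ⟨hcle, ?_⟩
    by_contra hcon
    push_neg at hcon
    set y := nextState P x r
    -- construct y' with larger ord and cum ≤ r
    by_cases hcase : (ordS y).1 + 1 < Fintype.card S
    · set y' : S := ordS.symm ⟨(ordS y).1 + 1, hcase⟩ with hy'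
      have hordy' : ordS y' = ⟨(ordS y).1 + 1, hcase⟩ := Equiv.apply_symm_apply _ _
      have hset : Finset.univ.filter (fun z => ordS z < ordS y') =
          insert y (Finset.univ.filter (fun z => ordS z < ordS y)) := by
        ext z
        simp only [Finset.mem_filter, Finset.mem_univ, true_and, Finset.mem_insert,
          hordy', Fin.lt_def]
        constructor
        · intro hz
          rcases Nat.lt_succ_iff_lt_or_eq.1 hz with h | h
          · exact Or.inr (Fin.lt_def.2 h)
          · exact Or.inl (ordS.injective (Fin.ext h))
        · rintro (rfl | hz)
          · exact Nat.lt_succ_self _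
          · exact Nat.lt_succ_of_lt (Fin.lt_def.1 hz)
      have hy'cum : cum P x y' = cum P x y + P x y := by
        rw [cum, hset, Finset.sum_insert (by simp), cum]; ring
      have hy'le : cum P x y' ≤ r := by rw [hy'cum]; exact hcon
      have : ordS y' ∈ A := (hmemA _).2 (Or.inr ⟨y', hy'le, rfl⟩)
      have hle := Finset.le_max' A _ this
      rw [← hns] at hle
      have : (ordS y).1 + 1 ≤ (ordS y).1 := by
        have := Fin.le_def.1 hle
        rw [hordy'] at this
        simpa using this
      omega
    · -- ordS y is the largest; cum y + P y = 1
      have hset : Finset.univ.filter (fun z => ordS z < ordS y) = Finset.univ.erase y := by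
        ext z
        simp only [Finset.mem_filter, Finset.mem_univ, true_and, Finset.mem_erase, and_true,
          Fin.lt_def]
        constructor
        · intro hz; intro hzy; rw [hzy] at hz; omega
        · intro hz
          have hne : (ordS z).1 ≠ (ordS y).1 := by
            intro h; exact hz (ordS.injective (Fin.ext h))
          have : (ordS z).1 < Fintype.card S := (ordS z).2
          omega
      have : cum P x y + P x y = 1 := by
        rw [cum, hset, ← h1 x]
        exact Finset.sum_erase_add _ _ (Finset.mem_univ y)
      rw [this] at hcon; linarith
  · rintro ⟨hc, hcp⟩
    have hyA : ordS y ∈ A := (hmemA _).2 (Or.inr ⟨y, hc, rfl⟩)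
    have hmax : A.max' (Finset.insert_nonempty _ _) = ordS y := by
      refine le_antisymm (Finset.max'_le _ _ _ ?_) (Finset.le_max' _ _ hyA)
      intro b hb
      rcases (hmemA _).1 hb with rfl | ⟨z, hz, rfl⟩
      · rw [botS, Equiv.apply_symm_apply]
        exact Fin.mk_le_of_le_val (Nat.zero_le _)
      · by_contra hcon
        push_neg at hcon
        have := cum_mono P h0 x hcon
        linarith
    rw [nextState, fromBits, hmax, Equiv.symm_apply_apply]


noncomputable def chain (x0 : S) : ℕ → ℝ → ℝ × S
  | 0 => fun r => (r, x0)
  | (t+1) => fun r => (nextRem P (chain x0 t r).2 (chain x0 t r).1,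
      nextState P (chain x0 t r).2 (chain x0 t r).1)

lemma measurable_decide_le (c : ℝ) : Measurable (fun r : ℝ => decide (c ≤ r)) := by
  have : (fun r : ℝ => decide (c ≤ r)) = fun r => if c ≤ r then true else false := by
    funext r; by_cases h : c ≤ r <;> simp [h]
  rw [this]
  exact Measurable.ite measurableSet_Ici measurable_const measurable_const

lemma measurable_nextState (x : S) : Measurable (nextState P x) := by
  have : nextState P x = fromBits ∘ (fun r (y : S) => decide (cum P x y ≤ r)) := rfl
  rw [this]
  exact (measurable_of_countable fromBits).comp
    (measurable_pi_lambda _ (fun y => measurable_decide_le _))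

lemma measurable_nextRem (x : S) : Measurable (nextRem P x) := by
  apply Measurable.div
  · exact measurable_id.sub
      ((measurable_of_countable (cum P x)).comp (measurable_nextState P x))
  · exact (measurable_of_countable (P x)).comp (measurable_nextState P x)

lemma measurable_step :
    Measurable (fun q : ℝ × S => ((nextRem P q.2 q.1, nextState P q.2 q.1) : ℝ × S)) := by
  apply measurable_from_prod_countable_left
  intro x
  exact (measurable_nextRem P x).prodMk (measurable_nextState P x)

lemma measurable_chain (x0 : S) (t : ℕ) : Measurable (chain P x0 t) := by
  induction t with
  | zero => exact measurable_id.prodMk measurable_const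
  | succ t ih =>
      have : chain P x0 (t+1) =
          (fun q : ℝ × S => ((nextRem P q.2 q.1, nextState P q.2 q.1) : ℝ × S)) ∘ chain P x0 t := rfl
      rw [this]
      exact (measurable_step P).comp ih

noncomputable def pathMap (x0 : S) : ℝ → (ℕ → S) := fun r t => (chain P x0 t r).2

lemma measurable_pathMap (x0 : S) : Measurable (pathMap P x0) :=
  measurable_pi_lambda _ (fun t => measurable_snd.comp (measurable_chain P x0 t))

/-- cylinder weight -/
noncomputable def Lw (x0 : S) (f : ℕ → S) (t : ℕ) : ℝ :=
  if f 0 = x0 then ∏ s ∈ Finset.range t, P (f s) (f (s+1)) else 0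

lemma Lw_nonneg (h0 : ∀ x y, 0 ≤ P x y) (x0 : S) (f : ℕ → S) (t : ℕ) :
    0 ≤ Lw P x0 f t := by
  rw [Lw]; split
  · exact Finset.prod_nonneg fun s _ => h0 _ _
  · exact le_rfl

lemma chain_interval (h0 : ∀ x y, 0 ≤ P x y) (h1 : ∀ x, ∑ y, P x y = 1)
    (x0 : S) (f : ℕ → S) : ∀ t : ℕ, ∃ a : ℝ, 0 ≤ a ∧ a + Lw P x0 f t ≤ 1 ∧
    (∀ u, u ∈ Set.Ico (0:ℝ) 1 →
      ((∀ s ≤ t, (chain P x0 s u).2 = f s) ↔ a ≤ u ∧ u < a + Lw P x0 f t)) ∧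
    (∀ u, a ≤ u → u < a + Lw P x0 f t → (chain P x0 t u).1 = (u - a) / Lw P x0 f t) := by
  intro t
  induction t with
  | zero =>
      by_cases hf : f 0 = x0
      · refine ⟨0, le_rfl, ?_, ?_, ?_⟩
        · simp [Lw, hf]
        · intro u hu
          constructor
          · intro _; simpa [Lw, hf] using hu
          · intro _ s hs
            interval_cases s
            simp [chain, hf]
        · intro u hu1 hu2
          simp [chain, Lw, hf]
      · refine ⟨0, le_rfl, ?_, ?_, ?_⟩
        · simp [Lw, hf]
        · intro u hu
          simp only [Lw, hf, if_false, add_zero]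
          constructor
          · intro h
            have := h 0 le_rfl
            simp only [chain] at this
            exact absurd this.symm hf
          · intro ⟨h1', h2'⟩; linarith
        · intro u hu1 hu2
          simp only [Lw, hf, if_false, add_zero] at hu2; linarith
  | succ t ih =>
      obtain ⟨a, ha0, ha1, hiff, hrem⟩ := ih
      set c := cum P (f t) (f (t+1)) with hc
      set q := P (f t) (f (t+1)) with hq
      set Lt := Lw P x0 f t with hLt
      have hLsucc : Lw P x0 f (t+1) = Lt * q := by
        rw [hLt, Lw, Lw]
        by_cases hf : f 0 = x0
        · simp only [hf, if_true]; rw [Finset.prod_range_succ]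
        · simp [hf]
      have hLn : 0 ≤ Lt := Lw_nonneg P h0 x0 f t
      have hc0 : 0 ≤ c := cum_nonneg P h0 _ _
      have hcq : c + q ≤ 1 := cum_add_le_one P h0 h1 _ _
      have hq0 : 0 ≤ q := h0 _ _
      by_cases hL : 0 < Lt
      · refine ⟨a + Lt * c, by positivity, ?_, ?_, ?_⟩
        · rw [hLsucc]; nlinarith
        · intro u hu
          have hchain : ∀ (hu1 : a ≤ u) (hu2 : u < a + Lt),
              (chain P x0 t u).2 = f t ∧ (chain P x0 t u).1 = (u - a) / Lt := by
            intro hu1 hu2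
            have hall := (hiff u hu).2 ⟨hu1, hu2⟩
            exact ⟨hall t le_rfl, hrem u hu1 hu2⟩
          constructor
          · intro hall
            have ht' : ∀ s ≤ t, (chain P x0 s u).2 = f s :=
              fun s hs => hall s (hs.trans (Nat.le_succ t))
            obtain ⟨hu1, hu2⟩ := (hiff u hu).1 ht'
            obtain ⟨hst, hrm⟩ := hchain hu1 hu2
            have hr0 : 0 ≤ (u - a) / Lt := div_nonneg (by linarith) hLn
            have hr1 : (u - a) / Lt < 1 := by
              rw [div_lt_one hL]; linarith
            have hnext : nextState P (f t) ((u - a)/Lt) = f (t+1) := by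
              have := hall (t+1) le_rfl
              simp only [chain] at this
              rw [hst, hrm] at this
              exact this
            obtain ⟨hg1, hg2⟩ := (nextState_eq_iff P h0 h1 _ _ hr0 hr1).1 hnext
            rw [hLsucc]
            constructor
            · have := (le_div_iff₀ hL).1 hg1; linarith
            · have := (div_lt_iff₀ hL).1 (by rw [← hc, ← hq] at hg2; exact hg2)
              linarith
          · rintro ⟨hu1, hu2⟩
            rw [hLsucc] at hu2
            have hu1' : a ≤ u := by nlinarith
            have hu2' : u < a + Lt := by nlinarith
            obtain ⟨hst, hrm⟩ := hchain hu1' hu2'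
            have hall := (hiff u hu).2 ⟨hu1', hu2'⟩
            intro s hs
            rcases Nat.lt_succ_iff_lt_or_eq.1 (Nat.lt_succ_of_le hs) with h | rfl
            · exact hall s (Nat.lt_succ_iff.1 h)
            · simp only [chain]
              rw [hst, hrm]
              apply (nextState_eq_iff P h0 h1 _ _ (div_nonneg (by linarith) hLn)
                (by rw [div_lt_one hL]; linarith)).2
              constructor
              · rw [le_div_iff₀ hL]; linarith
              · rw [div_lt_iff₀ hL]; linarith
        · intro u hu1 hu2
          rw [hLsucc] at hu2 ⊢
          have hqpos : 0 < q := by nlinarith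
          have hu1' : a ≤ u := by nlinarith
          have hu2' : u < a + Lt := by nlinarith
          have hu' : u ∈ Set.Ico (0:ℝ) 1 := ⟨by linarith, by nlinarith⟩
          have hall := (hiff u hu').2 ⟨hu1', hu2'⟩
          have hst : (chain P x0 t u).2 = f t := hall t le_rfl
          have hrm := hrem u hu1' hu2'
          have hr0 : 0 ≤ (u - a) / Lt := div_nonneg (by linarith) hLn
          have hr1 : (u - a) / Lt < 1 := by rw [div_lt_one hL]; linarith
          have hnext : nextState P (f t) ((u - a)/Lt) = f (t+1) := by
            apply (nextState_eq_iff P h0 h1 _ _ hr0 hr1).2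
            constructor
            · rw [le_div_iff₀ hL]; linarith
            · rw [div_lt_iff₀ hL]; linarith
          simp only [chain]
          rw [hst, hrm, nextRem, hnext, ← hc, ← hq]
          field_simp
          ring
      · have hL0 : Lt = 0 := le_antisymm (not_lt.1 hL) hLn
        refine ⟨a, ha0, ?_, ?_, ?_⟩
        · rw [hLsucc, hL0]; simpa [hL0] using ha1
        · intro u hu
          rw [hLsucc, hL0, zero_mul, add_zero]
          constructor
          · intro hall
            have ht' : ∀ s ≤ t, (chain P x0 s u).2 = f s :=
              fun s hs => hall s (hs.trans (Nat.le_succ t))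
            obtain ⟨hu1, hu2⟩ := (hiff u hu).1 ht'
            rw [hL0] at hu2; linarith
          · rintro ⟨hu1, hu2⟩; linarith
        · intro u hu1 hu2
          rw [hLsucc, hL0, zero_mul, add_zero] at hu2; linarith


noncomputable def muP (x0 : S) : Measure (ℕ → S) :=
  Measure.map (pathMap P x0) (volume.restrict (Set.Ico (0:ℝ) 1))

lemma isProb_muP (x0 : S) : IsProbabilityMeasure (muP P x0) := by
  have h : IsProbabilityMeasure (volume.restrict (Set.Ico (0:ℝ) 1)) := by
    constructor
    rw [Measure.restrict_apply_univ]
    simp [Real.volume_Ico]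
  exact Measure.isProbabilityMeasure_map (measurable_pathMap P x0).aemeasurable

lemma measurableSet_cylSet (f : ℕ → S) (t : ℕ) :
    MeasurableSet {ω : ℕ → S | ∀ s ≤ t, ω s = f s} := by
  have : {ω : ℕ → S | ∀ s ≤ t, ω s = f s} =
      ⋂ (s : ℕ) (_ : s ≤ t), (fun ω : ℕ → S => ω s) ⁻¹' {f s} := by
    ext ω; simp [Set.mem_iInter]
  rw [this]
  exact MeasurableSet.iInter fun s => MeasurableSet.iInter fun _ =>
    (measurable_pi_apply s) (measurableSet_singleton _)

lemma muP_cyl (h0 : ∀ x y, 0 ≤ P x y) (h1 : ∀ x, ∑ y, P x y = 1) (x0 : S)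
    (f : ℕ → S) (t : ℕ) :
    (muP P x0 {ω | ∀ s ≤ t, ω s = f s}).toReal = Lw P x0 f t := by
  obtain ⟨a, ha0, ha1, hiff, _⟩ := chain_interval P h0 h1 x0 f t
  rw [muP, Measure.map_apply (measurable_pathMap P x0) (measurableSet_cylSet f t),
    Measure.restrict_apply ((measurable_pathMap P x0) (measurableSet_cylSet f t))]
  have hset : (pathMap P x0) ⁻¹' {ω | ∀ s ≤ t, ω s = f s} ∩ Set.Ico (0:ℝ) 1 =
      Set.Ico a (a + Lw P x0 f t) := by
    ext u
    simp only [Set.mem_inter_iff, Set.mem_preimage, Set.mem_setOf_eq, Set.mem_Ico, pathMap]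
    constructor
    · rintro ⟨hall, hu⟩
      exact (hiff u hu).1 hall
    · rintro ⟨hu1, hu2⟩
      have hu : u ∈ Set.Ico (0:ℝ) 1 := ⟨by linarith, by linarith⟩
      exact ⟨(hiff u hu).2 ⟨hu1, hu2⟩, hu⟩
  rw [hset, Real.volume_Ico]
  rw [show a + Lw P x0 f t - a = Lw P x0 f t by ring]
  exact ENNReal.toReal_ofReal (Lw_nonneg P h0 x0 f t)

/-- Fin-indexed cylinder weight. -/
noncomputable def cylW (x0 : S) (t : ℕ) (h : Fin (t+1) → S) : ℝ :=
  if h 0 = x0 then ∏ s : Fin t, P (h s.castSucc) (h s.succ) else 0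

/-- extension of a finite path to an infinite one -/
def extendPath (x0 : S) (t : ℕ) (h : Fin (t+1) → S) : ℕ → S :=
  fun s => if hs : s < t + 1 then h ⟨s, hs⟩ else x0

lemma Lw_extendPath (x0 : S) (t : ℕ) (h : Fin (t+1) → S) :
    Lw P x0 (extendPath x0 t h) t = cylW P x0 t h := by
  rw [Lw, cylW, extendPath]
  have h0' : (if hs : (0:ℕ) < t + 1 then h ⟨0, hs⟩ else x0) = h 0 := by
    rw [dif_pos (Nat.succ_pos t)]; rfl
  rw [h0']
  congr 1
  rw [show ∏ s ∈ Finset.range t, P (extendPath x0 t h s) (extendPath x0 t h (s + 1)) =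
      ∏ s ∈ Finset.range t, P (if hs : s < t + 1 then h ⟨s, hs⟩ else x0)
        (if hs : s + 1 < t + 1 then h ⟨s+1, hs⟩ else x0) from rfl]
  rw [← Fin.prod_univ_eq_prod_range
    (fun s => P (if hs : s < t + 1 then h ⟨s, hs⟩ else x0)
      (if hs : s + 1 < t + 1 then h ⟨s+1, hs⟩ else x0)) t]
  apply Finset.prod_congr rfl
  intro s _
  have h1' : (if hs : (s:ℕ) < t + 1 then h ⟨s, hs⟩ else x0) = h s.castSucc := by
    rw [dif_pos (Nat.lt_succ_of_lt s.2)]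
    rfl
  have h2' : (if hs : (s:ℕ) + 1 < t + 1 then h ⟨(s:ℕ)+1, hs⟩ else x0) = h s.succ := by
    rw [dif_pos (Nat.succ_lt_succ s.2)]
    rfl
  rw [h1', h2']

lemma muP_horizon (h0 : ∀ x y, 0 ≤ P x y) (h1 : ∀ x, ∑ y, P x y = 1) (x0 : S)
    (t : ℕ) (Q : (ℕ → S) → Prop) [DecidablePred Q]
    (hQ : ∀ ω ω', (∀ s ≤ t, ω s = ω' s) → Q ω → Q ω') :
    (muP P x0 {ω | Q ω}).toReal =
      ∑ h : Fin (t+1) → S, if Q (extendPath x0 t h) then cylW P x0 t h else 0 := by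
  have : IsProbabilityMeasure (muP P x0) := isProb_muP P x0
  have hsetQ : {ω | Q ω} = ⋃ h ∈ Finset.univ.filter
      (fun h : Fin (t+1) → S => Q (extendPath x0 t h)),
      {ω : ℕ → S | ∀ s ≤ t, ω s = extendPath x0 t h s} := by
    ext ω
    simp only [Set.mem_setOf_eq, Set.mem_iUnion, Finset.mem_filter, Finset.mem_univ, true_and]
    constructor
    · intro hω
      refine ⟨fun s => ω s.1, ?_, ?_⟩
      · refine hQ ω _ ?_ hω
        intro s hs
        rw [extendPath, dif_pos (Nat.lt_succ_of_le hs)]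
      · intro s hs
        rw [extendPath, dif_pos (Nat.lt_succ_of_le hs)]
    · rintro ⟨h, hQh, hagree⟩
      refine hQ (extendPath x0 t h) ω ?_ hQh
      intro s hs
      exact (hagree s hs).symm
  rw [hsetQ, measure_biUnion_finset ?disj ?meas]
  · rw [ENNReal.toReal_sum (fun h _ => measure_ne_top _ _)]
    rw [Finset.sum_filter]
    apply Finset.sum_congr rfl
    intro h _
    split
    · rw [muP_cyl P h0 h1 x0 _ t, Lw_extendPath]
    · rfl
  case disj =>
    intro h1' hh1 h2' hh2 hne
    simp only [Function.onFun]
    apply Set.disjoint_left.2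
    intro ω hω1 hω2
    apply hne
    funext s
    have e1 := hω1 s.1 (Nat.lt_succ_iff.1 s.2)
    have e2 := hω2 s.1 (Nat.lt_succ_iff.1 s.2)
    rw [e2] at e1
    rw [extendPath, extendPath] at e1
    rw [dif_pos s.2, dif_pos s.2] at e1
    have : (⟨s.1, s.2⟩ : Fin (t+1)) = s := rfl
    rw [this] at e1
    exact e1.symm
  case meas =>
    intro h _
    exact measurableSet_cylSet _ t


end Construction

section Sums
variable {S : Type*} [Fintype S] [DecidableEq S]

lemma sum_snoc {α : Type*} [Fintype α] {M : Type*} [AddCommMonoid M] (t : ℕ)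
    (G : (Fin (t+2) → α) → M) :
    ∑ h : Fin (t+2) → α, G h = ∑ g : Fin (t+1) → α, ∑ y : α, G (Fin.snoc g y) := by
  have h1 : ∑ p : α × (Fin (t+1) → α), G (Fin.snoc p.2 p.1) = ∑ h : Fin (t+2) → α, G h :=
    Fintype.sum_equiv (Fin.snocEquiv (fun _ => α)) _ _ (fun p => rfl)
  rw [← h1, Fintype.sum_prod_type]
  exact Finset.sum_comm

variable (P : S → S → ℝ) (x0 : S)

lemma cylW_snoc (t : ℕ) (h : Fin (t+1) → S) (y : S) :
    cylW P x0 (t+1) (Fin.snoc h y) = cylW P x0 t h * P (h (Fin.last t)) y := by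
  rw [cylW, cylW]
  have h00 : (Fin.snoc h y : Fin (t+2) → S) 0 = h 0 := by
    rw [show (0 : Fin (t+2)) = Fin.castSucc 0 from rfl, Fin.snoc_castSucc]
  rw [h00]
  have hprod : ∏ s : Fin (t+1), P ((Fin.snoc h y : Fin (t+2) → S) s.castSucc)
      ((Fin.snoc h y : Fin (t+2) → S) s.succ) =
      (∏ s : Fin t, P (h s.castSucc) (h s.succ)) * P (h (Fin.last t)) y := by
    rw [Fin.prod_univ_castSucc]
    congr 1
    · apply Finset.prod_congr rfl
      intro s _
      rw [Fin.snoc_castSucc, Fin.succ_castSucc, Fin.snoc_castSucc]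
    · rw [Fin.snoc_castSucc, Fin.succ_last, Fin.snoc_last]
  rw [hprod]
  split
  · rfl
  · rw [zero_mul]

noncomputable def Wmass (t : ℕ) (x : S) : ℝ :=
  ∑ h : Fin (t+1) → S, if h (Fin.last t) = x then cylW P x0 t h else 0

lemma Wmass_zero (x : S) : Wmass P x0 0 x = if x = x0 then 1 else 0 := by
  rw [Wmass]
  rw [Fintype.sum_equiv (Equiv.funUnique (Fin 1) S)
    _ (fun y => if y = x then (if y = x0 then 1 else 0) else 0) (fun h => by
      simp only [Equiv.funUnique_apply]
      rfl)]
  rw [Finset.sum_ite_eq' Finset.univ x (fun y => if y = x0 then (1:ℝ) else 0)]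
  simp

lemma Wmass_succ (t : ℕ) (x : S) :
    Wmass P x0 (t+1) x = ∑ z, Wmass P x0 t z * P z x := by
  rw [Wmass, sum_snoc]
  have step1 : ∀ g : Fin (t+1) → S,
      (∑ y, if (Fin.snoc g y : Fin (t+2) → S) (Fin.last (t+1)) = x
        then cylW P x0 (t+1) (Fin.snoc g y) else 0) =
      cylW P x0 t g * P (g (Fin.last t)) x := by
    intro g
    have : ∀ y : S, ((Fin.snoc g y : Fin (t+2) → S) (Fin.last (t+1)) = x) = (y = x) := by
      intro y; rw [Fin.snoc_last]
    simp_rw [this]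
    rw [Finset.sum_ite_eq' Finset.univ x (fun y => cylW P x0 (t+1) (Fin.snoc g y))]
    simp only [Finset.mem_univ, if_true]
    exact cylW_snoc P x0 t g x
  rw [Finset.sum_congr rfl (fun g _ => step1 g)]
  rw [← Finset.sum_fiberwise Finset.univ (fun g : Fin (t+1) → S => g (Fin.last t))
    (fun g => cylW P x0 t g * P (g (Fin.last t)) x)]
  apply Finset.sum_congr rfl
  intro z _
  rw [Wmass, ← Finset.sum_filter]
  rw [Finset.sum_mul]
  apply Finset.sum_congr rfl
  intro g hg
  rw [Finset.mem_filter] at hg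
  rw [hg.2]

lemma Wmass_nonneg (h0 : ∀ x y, 0 ≤ P x y) (t : ℕ) (x : S) : 0 ≤ Wmass P x0 t x := by
  apply Finset.sum_nonneg
  intro h _
  split
  · rw [cylW]; split
    · exact Finset.prod_nonneg fun s _ => h0 _ _
    · exact le_rfl
  · exact le_rfl

end Sums

section Marg
variable {Ωt : Type*} [Fintype Ωt] [DecidableEq Ωt]
variable (Pc : (Ωt × Ωt) → (Ωt × Ωt) → ℝ) (x0 y0 : Ωt)

lemma margSum_fst (P1 : Ωt → Ωt → ℝ)
    (hm : ∀ (z : Ωt × Ωt) (τ : Ωt), ∑ y, Pc z (τ, y) = P1 z.1 τ)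
    (f : ℕ → Ωt) : ∀ t : ℕ,
    (∑ g : Fin (t+1) → Ωt, cylW Pc (x0, y0) t (fun s => (f s.1, g s))) =
      if f 0 = x0 then ∏ s ∈ Finset.range t, P1 (f s) (f (s+1)) else 0 := by
  intro t
  induction t with
  | zero =>
      rw [Fintype.sum_equiv (Equiv.funUnique (Fin 1) Ωt)
        _ (fun y => if f 0 = x0 ∧ y = y0 then (1:ℝ) else 0) (fun g => by
          simp only [Equiv.funUnique_apply]
          rw [cylW]
          simp only [Finset.univ_eq_empty, Finset.prod_empty, Prod.mk.injEq]
          rfl)]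
      simp only [Finset.range_zero, Finset.prod_empty]
      by_cases hf : f 0 = x0
      · simp only [hf, true_and, if_true]
        rw [Finset.sum_ite_eq' Finset.univ y0 (fun _ => (1:ℝ))]
        simp
      · simp [hf]
  | succ t ih =>
      rw [sum_snoc]
      have key : ∀ (g : Fin (t+1) → Ωt) (y : Ωt),
          cylW Pc (x0, y0) (t+1) (fun s : Fin (t+2) => (f s.1, (Fin.snoc g y : Fin (t+2) → Ωt) s)) =
          cylW Pc (x0, y0) t (fun s => (f s.1, g s)) *
            Pc (f t, g (Fin.last t)) (f (t+1), y) := by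
        intro g y
        have hsnoc : (fun s : Fin (t+2) => ((f s.1, (Fin.snoc g y : Fin (t+2) → Ωt) s) : Ωt × Ωt)) =
            Fin.snoc (fun s : Fin (t+1) => (f s.1, g s)) (f (t+1), y) := by
          funext s
          refine Fin.lastCases ?_ ?_ s
          · rw [Fin.snoc_last, Fin.snoc_last, Fin.val_last]
          · intro i
            rw [Fin.snoc_castSucc, Fin.snoc_castSucc, Fin.coe_castSucc]
        rw [hsnoc, cylW_snoc]
        rfl
      rw [Finset.sum_congr rfl (fun g _ => Finset.sum_congr rfl (fun y _ => key g y))]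
      have key2 : ∀ g : Fin (t+1) → Ωt,
          (∑ y, cylW Pc (x0, y0) t (fun s => (f s.1, g s)) *
            Pc (f t, g (Fin.last t)) (f (t+1), y)) =
          cylW Pc (x0, y0) t (fun s => (f s.1, g s)) * P1 (f t) (f (t+1)) := by
        intro g
        rw [← Finset.mul_sum, hm (f t, g (Fin.last t)) (f (t+1))]
      rw [Finset.sum_congr rfl (fun g _ => key2 g), ← Finset.sum_mul, ih]
      by_cases hf : f 0 = x0
      · simp only [hf, if_true]
        rw [Finset.prod_range_succ]
      · simp [hf]

lemma margSum_snd (P2 : Ωt → Ωt → ℝ)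
    (hm : ∀ (z : Ωt × Ωt) (τ : Ωt), ∑ y, Pc z (y, τ) = P2 z.2 τ)
    (f : ℕ → Ωt) : ∀ t : ℕ,
    (∑ g : Fin (t+1) → Ωt, cylW Pc (x0, y0) t (fun s => (g s, f s.1))) =
      if f 0 = y0 then ∏ s ∈ Finset.range t, P2 (f s) (f (s+1)) else 0 := by
  intro t
  induction t with
  | zero =>
      rw [Fintype.sum_equiv (Equiv.funUnique (Fin 1) Ωt)
        _ (fun y => if y = x0 ∧ f 0 = y0 then (1:ℝ) else 0) (fun g => by
          simp only [Equiv.funUnique_apply]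
          rw [cylW]
          simp only [Finset.univ_eq_empty, Finset.prod_empty, Prod.mk.injEq]
          rfl)]
      simp only [Finset.range_zero, Finset.prod_empty]
      by_cases hf : f 0 = y0
      · simp only [hf, and_true, if_true]
        rw [Finset.sum_ite_eq' Finset.univ x0 (fun _ => (1:ℝ))]
        simp
      · simp [hf]
  | succ t ih =>
      rw [sum_snoc]
      have key : ∀ (g : Fin (t+1) → Ωt) (y : Ωt),
          cylW Pc (x0, y0) (t+1) (fun s : Fin (t+2) => ((Fin.snoc g y : Fin (t+2) → Ωt) s, f s.1)) =
          cylW Pc (x0, y0) t (fun s => (g s, f s.1)) *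
            Pc (g (Fin.last t), f t) (y, f (t+1)) := by
        intro g y
        have hsnoc : (fun s : Fin (t+2) => (((Fin.snoc g y : Fin (t+2) → Ωt) s, f s.1) : Ωt × Ωt)) =
            Fin.snoc (fun s : Fin (t+1) => (g s, f s.1)) (y, f (t+1)) := by
          funext s
          refine Fin.lastCases ?_ ?_ s
          · rw [Fin.snoc_last, Fin.snoc_last, Fin.val_last]
          · intro i
            rw [Fin.snoc_castSucc, Fin.snoc_castSucc, Fin.coe_castSucc]
        rw [hsnoc, cylW_snoc]
        rfl
      rw [Finset.sum_congr rfl (fun g _ => Finset.sum_congr rfl (fun y _ => key g y))]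
      have key2 : ∀ g : Fin (t+1) → Ωt,
          (∑ y, cylW Pc (x0, y0) t (fun s => (g s, f s.1)) *
            Pc (g (Fin.last t), f t) (y, f (t+1))) =
          cylW Pc (x0, y0) t (fun s => (g s, f s.1)) * P2 (f t) (f (t+1)) := by
        intro g
        rw [← Finset.mul_sum, hm (g (Fin.last t), f t) (f (t+1))]
      rw [Finset.sum_congr rfl (fun g _ => key2 g), ← Finset.sum_mul, ih]
      by_cases hf : f 0 = y0
      · simp only [hf, if_true]
        rw [Finset.prod_range_succ]
      · simp [hf]

end Marg

section Kernel

/-- coupling weights for one site update -/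
noncomputable def wt (a b : ℝ) (c c' : Bool) : ℝ :=
  if c then (if c' then min a b else max (a - b) 0)
  else (if c' then max (b - a) 0 else min (1 - a) (1 - b))

lemma wt_tt (a b : ℝ) : wt a b true true = min a b := rfl
lemma wt_tf (a b : ℝ) : wt a b true false = max (a - b) 0 := rfl
lemma wt_ft (a b : ℝ) : wt a b false true = max (b - a) 0 := rfl
lemma wt_ff (a b : ℝ) : wt a b false false = min (1 - a) (1 - b) := rfl

lemma wt_nonneg {a b : ℝ} (ha0 : 0 ≤ a) (ha1 : a ≤ 1) (hb0 : 0 ≤ b) (hb1 : b ≤ 1)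
    (c c' : Bool) : 0 ≤ wt a b c c' := by
  cases c <;> cases c' <;>
    simp only [wt_tt, wt_tf, wt_ft, wt_ff, le_max_iff, le_min_iff] <;>
    [constructor; skip; skip; constructor] <;> first
      | (constructor <;> linarith)
      | linarith
      | (right; linarith)

lemma wt_sum_right (a b : ℝ) (c : Bool) :
    ∑ c' : Bool, wt a b c c' = if c then a else 1 - a := by
  rw [Fintype.sum_bool]
  cases c
  · rw [wt_ft, wt_ff, if_neg (by simp)]
    rcases le_total a b with h | h
    · rw [max_eq_left (by linarith), min_eq_right (by linarith)]; ring
    · rw [max_eq_right (by linarith), min_eq_left (by linarith)]; ring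
  · rw [wt_tt, wt_tf, if_pos rfl]
    rcases le_total a b with h | h
    · rw [min_eq_left h, max_eq_right (by linarith)]; ring
    · rw [min_eq_right h, max_eq_left (by linarith)]; ring

lemma wt_sum_left (a b : ℝ) (c' : Bool) :
    ∑ c : Bool, wt a b c c' = if c' then b else 1 - b := by
  rw [Fintype.sum_bool]
  cases c'
  · rw [wt_tf, wt_ff, if_neg (by simp)]
    rcases le_total a b with h | h
    · rw [max_eq_right (by linarith), min_eq_right (by linarith)]; ring
    · rw [max_eq_left (by linarith), min_eq_left (by linarith)]; ring
  · rw [wt_tt, wt_ft, if_pos rfl]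
    rcases le_total a b with h | h
    · rw [min_eq_left h, max_eq_left (by linarith)]; ring
    · rw [min_eq_right h, max_eq_right (by linarith)]; ring

lemma wt_sum_all (a b : ℝ) :
    ∑ c : Bool, ∑ c' : Bool, wt a b c c' = 1 := by
  rw [Fintype.sum_bool, wt_sum_right, wt_sum_right]
  simp

lemma max_add_max (a b : ℝ) : max (a - b) 0 + max (b - a) 0 = |a - b| := by
  rcases le_total a b with h | h
  · rw [max_eq_right (by linarith), max_eq_left (by linarith), abs_of_nonpos (by linarith)]
    ring
  · rw [max_eq_left (by linarith), max_eq_right (by linarith), abs_of_nonneg (by linarith)]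
    ring

lemma wt_sum_spin (a b : ℝ) :
    ∑ c : Bool, ∑ c' : Bool, wt a b c c' * |spin c - spin c'| = 2 * |a - b| := by
  rw [Fintype.sum_bool, Fintype.sum_bool, Fintype.sum_bool,
    wt_tt, wt_tf, wt_ft, wt_ff]
  have h1 : |spin true - spin true| = 0 := by simp [spin]
  have h2 : |spin true - spin false| = 2 := by
    rw [spin, spin]; norm_num
  have h3 : |spin false - spin true| = 2 := by
    rw [spin, spin]; norm_num
  have h4 : |spin false - spin false| = 0 := by simp [spin]
  rw [h1, h2, h3, h4, ← max_add_max]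
  ring


variable {m : ℕ} (n : ℕ) (β : ℝ) (k : Fin m → Fin m → ℝ) (g : Fin n → Fin m)

/-- the coupled transition kernel (same site, monotone coupling) -/
noncomputable def cpl (x y : (Fin n → Bool) × (Fin n → Bool)) : ℝ :=
  (1 / n) * ∑ v, ∑ c : Bool, ∑ c' : Bool,
    if y = (Function.update x.1 v c, Function.update x.2 v c') then
      wt (rp β (meanField n k g x.1 v)) (rp β (meanField n k g x.2 v)) c c' else 0

lemma cpl_nonneg (x y : (Fin n → Bool) × (Fin n → Bool)) : 0 ≤ cpl n β k g x y := by
  apply mul_nonneg (by positivity)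
  apply Finset.sum_nonneg; intro v _
  apply Finset.sum_nonneg; intro c _
  apply Finset.sum_nonneg; intro c' _
  split
  · exact wt_nonneg (rp_nonneg _ _) (rp_le_one _ _) (rp_nonneg _ _) (rp_le_one _ _) _ _
  · exact le_rfl

lemma cpl_rowsum (hn : 0 < n) (x : (Fin n → Bool) × (Fin n → Bool)) :
    ∑ y, cpl n β k g x y = 1 := by
  simp only [cpl]
  rw [← Finset.mul_sum]
  rw [Finset.sum_comm]
  have hv : ∀ v : Fin n,
      (∑ y : (Fin n → Bool) × (Fin n → Bool), ∑ c : Bool, ∑ c' : Bool,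
        if y = (Function.update x.1 v c, Function.update x.2 v c') then
          wt (rp β (meanField n k g x.1 v)) (rp β (meanField n k g x.2 v)) c c' else 0) = 1 := by
    intro v
    rw [Finset.sum_comm]
    have : ∀ c : Bool,
        (∑ y : (Fin n → Bool) × (Fin n → Bool), ∑ c' : Bool,
          if y = (Function.update x.1 v c, Function.update x.2 v c') then
            wt (rp β (meanField n k g x.1 v)) (rp β (meanField n k g x.2 v)) c c' else 0) =
        ∑ c' : Bool, wt (rp β (meanField n k g x.1 v)) (rp β (meanField n k g x.2 v)) c c' := by
      intro c
      rw [Finset.sum_comm]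
      apply Finset.sum_congr rfl
      intro c' _
      rw [Finset.sum_ite_eq' Finset.univ _
        (fun _ => wt (rp β (meanField n k g x.1 v)) (rp β (meanField n k g x.2 v)) c c')]
      simp
    rw [Finset.sum_congr rfl (fun c _ => this c)]
    exact wt_sum_all _ _
  rw [Finset.sum_congr rfl (fun v _ => hv v), Finset.sum_const, Finset.card_univ,
    Fintype.card_fin, nsmul_eq_mul]
  have : (n : ℝ) ≠ 0 := Nat.cast_ne_zero.2 hn.ne'
  field_simp

lemma cpl_marg_fst (z : (Fin n → Bool) × (Fin n → Bool)) (τ : Fin n → Bool) :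
    ∑ y, cpl n β k g z (τ, y) = glauber n β k g z.1 τ := by
  simp only [cpl]
  rw [glauber, ← Finset.mul_sum, Finset.sum_comm]
  congr 1
  apply Finset.sum_congr rfl
  intro v _
  set a := rp β (meanField n k g z.1 v)
  set b := rp β (meanField n k g z.2 v)
  have key : ∀ (c c' : Bool),
      (∑ y : Fin n → Bool, if (τ, y) = (Function.update z.1 v c, Function.update z.2 v c')
        then wt a b c c' else 0) =
      if τ = Function.update z.1 v c then wt a b c c' else 0 := by
    intro c c'
    by_cases hτ : τ = Function.update z.1 v c
    · rw [if_pos hτ]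
      have : ∀ y : Fin n → Bool,
          ((τ, y) = (Function.update z.1 v c, Function.update z.2 v c')) =
          (y = Function.update z.2 v c') := by
        intro y
        simp [Prod.ext_iff, hτ]
      simp_rw [this]
      rw [Finset.sum_ite_eq' Finset.univ _ (fun _ => wt a b c c')]
      simp
    · rw [if_neg hτ]
      apply Finset.sum_eq_zero
      intro y _
      rw [if_neg]
      simp only [Prod.mk.injEq, not_and]
      intro h; exact absurd h hτ
  have swap : (∑ y : Fin n → Bool, ∑ c : Bool, ∑ c' : Bool,
      if (τ, y) = (Function.update z.1 v c, Function.update z.2 v c')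
        then wt a b c c' else 0) =
      ∑ c : Bool, ∑ c' : Bool, if τ = Function.update z.1 v c then wt a b c c' else 0 := by
    rw [Finset.sum_comm]
    apply Finset.sum_congr rfl
    intro c _
    rw [Finset.sum_comm]
    exact Finset.sum_congr rfl (fun c' _ => key c c')
  rw [swap]
  have pull : ∀ c : Bool, (∑ c' : Bool, if τ = Function.update z.1 v c then wt a b c c' else 0) =
      if τ = Function.update z.1 v c then (if c then a else 1 - a) else 0 := by
    intro c
    split
    · exact wt_sum_right a b c
    · simp
  rw [Fintype.sum_bool, pull, pull]
  have hrm : rm β (meanField n k g z.1 v) = 1 - a := by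
    have := rp_add_rm β (meanField n k g z.1 v); linarith
  rw [hrm]
  norm_num

lemma cpl_marg_snd (z : (Fin n → Bool) × (Fin n → Bool)) (τ : Fin n → Bool) :
    ∑ y, cpl n β k g z (y, τ) = glauber n β k g z.2 τ := by
  simp only [cpl]
  rw [glauber, ← Finset.mul_sum, Finset.sum_comm]
  congr 1
  apply Finset.sum_congr rfl
  intro v _
  set a := rp β (meanField n k g z.1 v)
  set b := rp β (meanField n k g z.2 v)
  have key : ∀ (c c' : Bool),
      (∑ y : Fin n → Bool, if (y, τ) = (Function.update z.1 v c, Function.update z.2 v c')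
        then wt a b c c' else 0) =
      if τ = Function.update z.2 v c' then wt a b c c' else 0 := by
    intro c c'
    by_cases hτ : τ = Function.update z.2 v c'
    · rw [if_pos hτ]
      have : ∀ y : Fin n → Bool,
          ((y, τ) = (Function.update z.1 v c, Function.update z.2 v c')) =
          (y = Function.update z.1 v c) := by
        intro y
        simp [Prod.ext_iff, hτ]
      simp_rw [this]
      rw [Finset.sum_ite_eq' Finset.univ _ (fun _ => wt a b c c')]
      simp
    · rw [if_neg hτ]
      apply Finset.sum_eq_zero
      intro y _
      rw [if_neg]
      simp only [Prod.mk.injEq, not_and]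
      intro _ h; exact absurd h hτ
  have swap : (∑ y : Fin n → Bool, ∑ c : Bool, ∑ c' : Bool,
      if (y, τ) = (Function.update z.1 v c, Function.update z.2 v c')
        then wt a b c c' else 0) =
      ∑ c : Bool, ∑ c' : Bool, if τ = Function.update z.2 v c' then wt a b c c' else 0 := by
    rw [Finset.sum_comm]
    apply Finset.sum_congr rfl
    intro c _
    rw [Finset.sum_comm]
    exact Finset.sum_congr rfl (fun c' _ => key c c')
  rw [swap, Finset.sum_comm]
  have pull : ∀ c' : Bool, (∑ c : Bool, if τ = Function.update z.2 v c' then wt a b c c' else 0) =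
      if τ = Function.update z.2 v c' then (if c' then b else 1 - b) else 0 := by
    intro c'
    split
    · exact wt_sum_left a b c'
    · simp
  rw [Fintype.sum_bool, pull, pull]
  have hrm : rm β (meanField n k g z.2 v) = 1 - b := by
    have := rp_add_rm β (meanField n k g z.2 v); linarith
  rw [hrm]
  norm_num

lemma foursum (a b : ℝ) :
    min a b + max (a - b) 0 + max (b - a) 0 + min (1 - a) (1 - b) = 1 := by
  rcases le_total a b with h | h
  · rw [min_eq_left h, max_eq_right (by linarith), max_eq_left (by linarith),
      min_eq_right (by linarith)]; ring
  · rw [min_eq_right h, max_eq_left (by linarith), max_eq_right (by linarith),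
      min_eq_left (by linarith)]; ring

lemma wt_dist_sum (a b D e : ℝ) :
    ∑ c : Bool, ∑ c' : Bool, wt a b c c' * (D + ((1/2) * |spin c - spin c'| - e)) =
      D + (|a - b| - e) := by
  rw [Fintype.sum_bool, Fintype.sum_bool, Fintype.sum_bool,
    wt_tt, wt_tf, wt_ft, wt_ff]
  have h1 : |spin true - spin true| = 0 := by simp [spin]
  have h2 : |spin true - spin false| = 2 := by rw [spin, spin]; norm_num
  have h3 : |spin false - spin true| = 2 := by rw [spin, spin]; norm_num
  have h4 : |spin false - spin false| = 0 := by simp [spin]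
  rw [h1, h2, h3, h4]
  linear_combination (D - e) * foursum a b + max_add_max a b

lemma blockDist_update (σ σ' : Fin n → Bool) (v : Fin n) (c c' : Bool) (i : Fin m) :
    blockDist n g (Function.update σ v c) (Function.update σ' v c') i =
    blockDist n g σ σ' i + (if g v = i then
      (1/2) * |spin c - spin c'| - (1/2) * |spin (σ v) - spin (σ' v)| else 0) := by
  rw [blockDist, blockDist]
  by_cases hv : g v = i
  · rw [if_pos hv]
    have hvmem : v ∈ Finset.univ.filter (fun w => g w = i) := by simp [hv]
    have e2 := Finset.sum_erase_add (Finset.univ.filter (fun w => g w = i))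
      (fun w => |spin (Function.update σ v c w) - spin (Function.update σ' v c' w)|) hvmem
    have e3 := Finset.sum_erase_add (Finset.univ.filter (fun w => g w = i))
      (fun w => |spin (σ w) - spin (σ' w)|) hvmem
    have e1 : ∑ w ∈ (Finset.univ.filter (fun w => g w = i)).erase v,
        |spin (Function.update σ v c w) - spin (Function.update σ' v c' w)| =
        ∑ w ∈ (Finset.univ.filter (fun w => g w = i)).erase v,
        |spin (σ w) - spin (σ' w)| := by
      apply Finset.sum_congr rfl
      intro w hw
      rw [Function.update_of_ne (Finset.mem_erase.1 hw).1,
        Function.update_of_ne (Finset.mem_erase.1 hw).1]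
    rw [← e2, ← e3, e1]
    simp only [Function.update_self]
    ring
  · rw [if_neg hv, add_zero]
    congr 1
    apply Finset.sum_congr rfl
    intro w hw
    have hwv : w ≠ v := by
      intro h
      rw [Finset.mem_filter] at hw
      exact hv (h ▸ hw.2)
    rw [Function.update_of_ne hwv, Function.update_of_ne hwv]

lemma sum_ite_collapse {γ : Type*} [Fintype γ] [DecidableEq γ]
    {ι₁ ι₂ ι₃ : Type*} [Fintype ι₁] [Fintype ι₂] [Fintype ι₃]
    (F : ι₁ → ι₂ → ι₃ → γ) (w : ι₁ → ι₂ → ι₃ → ℝ) (d : γ → ℝ) :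
    ∑ y : γ, (∑ v, ∑ c, ∑ c', if y = F v c c' then w v c c' else 0) * d y =
      ∑ v, ∑ c, ∑ c', w v c c' * d (F v c c') := by
  simp_rw [Finset.sum_mul, ite_mul, zero_mul]
  rw [Finset.sum_comm]
  refine Finset.sum_congr rfl fun v _ => ?_
  rw [Finset.sum_comm]
  refine Finset.sum_congr rfl fun c _ => ?_
  rw [Finset.sum_comm]
  refine Finset.sum_congr rfl fun c' _ => ?_
  rw [Finset.sum_ite_eq' Finset.univ (F v c c') (fun y => w v c c' * d y)]
  simp

lemma cpl_drift (hβ : 0 ≤ β) (hn : 0 < n) (p : Fin m → ℝ)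
    (hgcard : ∀ i, ((Finset.univ.filter fun v => g v = i).card : ℝ) = n * p i)
    (hk : ∀ i j, 0 < k i j)
    (A : Matrix (Fin m) (Fin m) ℝ)
    (hA : ∀ i j, A i j =
      if i = j then 1 - 1 / (n : ℝ) + β * (k i i / n) * (p i - 1 / n)
      else β * p i * k i j / n)
    (x : (Fin n → Bool) × (Fin n → Bool)) (i : Fin m) :
    ∑ y, cpl n β k g x y * blockDist n g y.1 y.2 i ≤
      ∑ j, A i j * blockDist n g x.1 x.2 j := by
  have hnR : (n : ℝ) ≠ 0 := Nat.cast_ne_zero.2 hn.ne'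
  set a : Fin n → ℝ := fun v => rp β (meanField n k g x.1 v) with ha
  set b : Fin n → ℝ := fun v => rp β (meanField n k g x.2 v) with hb
  set Δ : Fin n → ℝ := fun v => |spin (x.1 v) - spin (x.2 v)| with hΔ
  set D : Fin m → ℝ := fun j => blockDist n g x.1 x.2 j with hD
  -- Σ over fiber of Δ equals 2 * D j
  have hDfib : ∀ j, ∑ w ∈ Finset.univ.filter (fun w => g w = j), Δ w = 2 * D j := by
    intro j
    have hj : D j = (1/2) * ∑ w ∈ Finset.univ.filter (fun w => g w = j), Δ w := rfl
    rw [hj]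
    ring
  -- STEP A
  have stepA : ∑ y, cpl n β k g x y * blockDist n g y.1 y.2 i =
      (1/n) * ∑ v, ∑ c : Bool, ∑ c' : Bool, wt (a v) (b v) c c' *
        blockDist n g (Function.update x.1 v c) (Function.update x.2 v c') i := by
    simp only [cpl]
    simp_rw [mul_assoc]
    rw [← Finset.mul_sum]
    congr 1
    have := sum_ite_collapse
      (fun (v : Fin n) (c c' : Bool) =>
        ((Function.update x.1 v c, Function.update x.2 v c') :
          (Fin n → Bool) × (Fin n → Bool)))
      (fun v c c' => wt (a v) (b v) c c')
      (fun y => blockDist n g y.1 y.2 i)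
    exact this
  -- STEP B
  have stepB : ∀ v, (∑ c : Bool, ∑ c' : Bool, wt (a v) (b v) c c' *
      blockDist n g (Function.update x.1 v c) (Function.update x.2 v c') i) =
      D i + (if g v = i then |a v - b v| - (1/2) * Δ v else 0) := by
    intro v
    by_cases hv : g v = i
    · rw [if_pos hv]
      have : ∀ c c' : Bool,
          blockDist n g (Function.update x.1 v c) (Function.update x.2 v c') i =
          D i + ((1/2) * |spin c - spin c'| - (1/2) * Δ v) := by
        intro c c'
        rw [blockDist_update, if_pos hv]
      rw [Finset.sum_congr rfl (fun c _ => Finset.sum_congr rfl (fun c' _ => by rw [this c c']))]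
      rw [wt_dist_sum]
    · rw [if_neg hv, add_zero]
      have : ∀ c c' : Bool,
          blockDist n g (Function.update x.1 v c) (Function.update x.2 v c') i = D i := by
        intro c c'
        rw [blockDist_update, if_neg hv, add_zero]
      rw [Finset.sum_congr rfl (fun c _ => Finset.sum_congr rfl (fun c' _ => by rw [this c c']))]
      simp_rw [← Finset.sum_mul]
      rw [wt_sum_all, one_mul]
  -- STEP C
  have stepC : (∑ v, (D i + (if g v = i then |a v - b v| - (1/2) * Δ v else 0))) =
      n * D i - D i + ∑ v ∈ Finset.univ.filter (fun v => g v = i), |a v - b v| := by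
    rw [Finset.sum_add_distrib, Finset.sum_const, Finset.card_univ, Fintype.card_fin,
      nsmul_eq_mul, ← Finset.sum_filter]
    rw [Finset.sum_sub_distrib]
    have : ∑ v ∈ Finset.univ.filter (fun v => g v = i), (1/2) * Δ v = D i := by
      rw [← Finset.mul_sum, hDfib]; ring
    rw [this]
    ring
  -- STEP D : Lipschitz bound on the fiber sum
  have stepD : ∑ v ∈ Finset.univ.filter (fun v => g v = i), |a v - b v| ≤
      (β/2) * ((n * p i) * (∑ j, (k i j / n) * (2 * D j)) - (k i i / n) * (2 * D i)) := by
    have hfib : (∑ w, (k i (g w) / n) * Δ w) = ∑ j, (k i j / n) * (2 * D j) := by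
      rw [← Finset.sum_fiberwise Finset.univ g (fun w => (k i (g w) / n) * Δ w)]
      apply Finset.sum_congr rfl
      intro j _
      have hj : ∀ w ∈ Finset.univ.filter (fun w => g w = j),
          (k i (g w) / n) * Δ w = (k i j / n) * Δ w := fun w hw => by
        rw [(Finset.mem_filter.1 hw).2]
      rw [Finset.sum_congr rfl hj, ← Finset.mul_sum, hDfib]
    have hperv : ∀ v ∈ Finset.univ.filter (fun v => g v = i),
        |a v - b v| ≤ (β/2) * ((∑ j, (k i j / n) * (2 * D j)) - (k i i / n) * Δ v) := by
      intro v hv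
      have hgv : g v = i := (Finset.mem_filter.1 hv).2
      have hmf : meanField n k g x.1 v - meanField n k g x.2 v =
          ∑ w ∈ Finset.univ.filter (fun w => w ≠ v),
            (k (g v) (g w) / n) * (spin (x.1 w) - spin (x.2 w)) := by
        rw [meanField, meanField, ← Finset.sum_sub_distrib]
        exact Finset.sum_congr rfl fun w _ => by ring
      have habs : |meanField n k g x.1 v - meanField n k g x.2 v| ≤
          ∑ w ∈ Finset.univ.filter (fun w => w ≠ v), (k (g v) (g w) / n) * Δ w := by
        rw [hmf]
        refine (Finset.abs_sum_le_sum_abs _ _).trans ?_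
        apply Finset.sum_le_sum
        intro w _
        rw [abs_mul, abs_of_nonneg (div_nonneg (hk _ _).le (Nat.cast_nonneg n))]
      have herase : ∑ w ∈ Finset.univ.filter (fun w => w ≠ v), (k (g v) (g w) / n) * Δ w =
          (∑ w, (k i (g w) / n) * Δ w) - (k i i / n) * Δ v := by
        have h5 := Finset.sum_erase_add Finset.univ (fun w => (k i (g w) / n) * Δ w)
          (Finset.mem_univ v)
        rw [Finset.filter_ne', hgv, eq_sub_iff_add_eq]
        have h6 : (k i i / n) * Δ v = (k i (g v) / n) * Δ v := by rw [hgv]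
        rw [h6]
        exact h5
      calc |a v - b v| ≤ β / 2 * |meanField n k g x.1 v - meanField n k g x.2 v| :=
            rp_lip hβ _ _
        _ ≤ β / 2 * (∑ w ∈ Finset.univ.filter (fun w => w ≠ v), (k (g v) (g w) / n) * Δ w) :=
            mul_le_mul_of_nonneg_left habs (by linarith)
        _ = (β/2) * ((∑ j, (k i j / n) * (2 * D j)) - (k i i / n) * Δ v) := by
            rw [herase, hfib]
    calc ∑ v ∈ Finset.univ.filter (fun v => g v = i), |a v - b v|
        ≤ ∑ v ∈ Finset.univ.filter (fun v => g v = i),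
          (β/2) * ((∑ j, (k i j / n) * (2 * D j)) - (k i i / n) * Δ v) :=
          Finset.sum_le_sum hperv
      _ = (β/2) * ((n * p i) * (∑ j, (k i j / n) * (2 * D j)) - (k i i / n) * (2 * D i)) := by
          rw [← Finset.mul_sum]
          congr 1
          rw [Finset.sum_sub_distrib, Finset.sum_const, nsmul_eq_mul]
          rw [hgcard i]
          congr 1
          rw [← Finset.mul_sum, hDfib]
  -- STEP E : assemble
  have hAsplit : ∀ j, A i j = β * p i * k i j / n +
      (if i = j then (1 - 1/(n:ℝ) + β * (k i i / n) * (p i - 1/n)) - β * p i * k i i / n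
        else 0) := by
    intro j
    rw [hA]
    by_cases h : i = j
    · subst h
      rw [if_pos rfl, if_pos rfl]
      ring
    · rw [if_neg h, if_neg h, add_zero]
  have hRHS : ∑ j, A i j * D j = (∑ j, (β * p i * k i j / n) * D j) +
      ((1 - 1/(n:ℝ) + β * (k i i / n) * (p i - 1/n)) - β * p i * k i i / n) * D i := by
    rw [Finset.sum_congr rfl (fun j _ => by rw [hAsplit j, add_mul])]
    rw [Finset.sum_add_distrib]
    congr 1
    simp_rw [ite_mul, zero_mul]
    rw [Finset.sum_ite_eq Finset.univ i (fun j =>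
      ((1 - 1/(n:ℝ) + β * (k i i / n) * (p i - 1/n)) - β * p i * k i i / n) * D j)]
    simp
  have hC : ∑ j, (β * p i * k i j / n) * D j =
      (β * p i / 2) * (∑ j, (k i j / n) * (2 * D j)) := by
    rw [Finset.mul_sum]
    exact Finset.sum_congr rfl fun j _ => by ring
  calc ∑ y, cpl n β k g x y * blockDist n g y.1 y.2 i
      = (1/n) * ∑ v, ∑ c : Bool, ∑ c' : Bool, wt (a v) (b v) c c' *
        blockDist n g (Function.update x.1 v c) (Function.update x.2 v c') i := stepA
    _ = (1/n) * (n * D i - D i + ∑ v ∈ Finset.univ.filter (fun v => g v = i), |a v - b v|) := by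
        rw [Finset.sum_congr rfl (fun v _ => stepB v), stepC]
    _ ≤ (1/n) * (n * D i - D i +
        (β/2) * ((n * p i) * (∑ j, (k i j / n) * (2 * D j)) - (k i i / n) * (2 * D i))) := by
        apply mul_le_mul_of_nonneg_left _ (by positivity)
        linarith [stepD]
    _ = ∑ j, A i j * D j := by
        rw [hRHS, hC]
        field_simp
        ring

end Kernel

section Expect
variable {S : Type*} [Fintype S] [DecidableEq S] [MeasurableSpace S]
  [MeasurableSingletonClass S] [Nonempty S]

lemma integral_comp_eval (μ : Measure (ℕ → S)) [IsProbabilityMeasure μ]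
    (t : ℕ) (φ : S → ℝ) :
    ∫ ω, φ (ω t) ∂μ = ∑ x, (μ {ω | ω t = x}).toReal * φ x := by
  have hmeas : ∀ x : S, MeasurableSet {ω : ℕ → S | ω t = x} := by
    intro x
    have he : {ω : ℕ → S | ω t = x} = (fun ω : ℕ → S => ω t) ⁻¹' {x} := rfl
    rw [he]
    exact measurable_pi_apply t (measurableSet_singleton x)
  have hfun : (fun ω : ℕ → S => φ (ω t)) =
      fun ω => ∑ x, Set.indicator {ω : ℕ → S | ω t = x} (fun _ => φ x) ω := by
    funext ω
    simp only [Set.indicator_apply, Set.mem_setOf_eq]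
    rw [Finset.sum_ite_eq Finset.univ (ω t) φ]
    simp
  rw [hfun, integral_finset_sum Finset.univ
    (fun x _ => (integrable_const (φ x)).indicator (hmeas x))]
  apply Finset.sum_congr rfl
  intro x _
  rw [integral_indicator_const (φ x) (hmeas x), smul_eq_mul, mul_comm]
  exact mul_comm _ _

lemma muP_point (P : S → S → ℝ) (h0 : ∀ x y, 0 ≤ P x y) (h1 : ∀ x, ∑ y, P x y = 1)
    (x0 : S) (t : ℕ) (x : S) :
    (muP P x0 {ω | ω t = x}).toReal = Wmass P x0 t x := by
  classical
  rw [muP_horizon P h0 h1 x0 t (fun ω => ω t = x)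
    (fun ω ω' hag h => by
      show ω' t = x
      rw [← hag t le_rfl]; exact h)]
  simp only [Wmass]
  apply Finset.sum_congr rfl
  intro h _
  have hext : extendPath x0 t h t = h (Fin.last t) := by
    rw [extendPath, dif_pos (Nat.lt_succ_self t)]
    rfl
  rw [hext]

end Expect

section PairMeas
variable {Ωt : Type*} [Fintype Ωt] [DecidableEq Ωt] [MeasurableSpace Ωt]
  [MeasurableSingletonClass Ωt] [Nonempty Ωt]

lemma muP_marg_fst (Pc : (Ωt × Ωt) → (Ωt × Ωt) → ℝ)
    (h0 : ∀ x y, 0 ≤ Pc x y) (h1 : ∀ x, ∑ y, Pc x y = 1)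
    (P1 : Ωt → Ωt → ℝ) (hm : ∀ (z : Ωt × Ωt) (τ : Ωt), ∑ y, Pc z (τ, y) = P1 z.1 τ)
    (x0 y0 : Ωt) (f : ℕ → Ωt) (t : ℕ) :
    (muP Pc (x0, y0) {ω | ∀ s ≤ t, (ω s).1 = f s}).toReal =
      if f 0 = x0 then ∏ s ∈ Finset.range t, P1 (f s) (f (s+1)) else 0 := by
  classical
  rw [muP_horizon Pc h0 h1 (x0, y0) t (fun ω => ∀ s ≤ t, (ω s).1 = f s)
    (fun ω ω' hag h => by
      intro s hs
      rw [← hag s hs]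
      exact h s hs)]
  have hcond : ∀ h : Fin (t+1) → Ωt × Ωt,
      (∀ s ≤ t, (extendPath (x0, y0) t h s).1 = f s) ↔
        (∀ s : Fin (t+1), (h s).1 = f s.1) := by
    intro h
    constructor
    · intro hc s
      have := hc s.1 (Nat.lt_succ_iff.1 s.2)
      rw [extendPath, dif_pos s.2] at this
      exact this
    · intro hc s hs
      rw [extendPath, dif_pos (Nat.lt_succ_of_le hs)]
      exact hc ⟨s, Nat.lt_succ_of_le hs⟩
  rw [Finset.sum_congr rfl (fun h _ => if_congr (hcond h) rfl rfl)]
  have hre : (∑ h : Fin (t+1) → Ωt × Ωt,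
      if ∀ s : Fin (t+1), (h s).1 = f s.1 then cylW Pc (x0, y0) t h else 0) =
      ∑ q : (Fin (t+1) → Ωt) × (Fin (t+1) → Ωt),
        (if (∀ s : Fin (t+1), q.1 s = f s.1) then
          cylW Pc (x0, y0) t (fun s => (q.1 s, q.2 s)) else 0) :=
    Fintype.sum_equiv (Equiv.arrowProdEquivProdArrow (Fin (t+1)) (fun _ => Ωt) (fun _ => Ωt)) _ _ (fun h => rfl)
  rw [hre, Fintype.sum_prod_type]
  have hpull : ∀ g1 : Fin (t+1) → Ωt,
      (∑ g2 : Fin (t+1) → Ωt, if (∀ s : Fin (t+1), g1 s = f s.1) then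
        cylW Pc (x0, y0) t (fun s => (g1 s, g2 s)) else 0) =
      if g1 = (fun s : Fin (t+1) => f s.1) then
        (∑ g2 : Fin (t+1) → Ωt, cylW Pc (x0, y0) t (fun s => (g1 s, g2 s))) else 0 := by
    intro g1
    have hiff : (∀ s : Fin (t+1), g1 s = f s.1) ↔ (g1 = fun s : Fin (t+1) => f s.1) :=
      funext_iff.symm
    rw [Finset.sum_congr rfl (fun g2 _ => if_congr hiff rfl rfl)]
    split
    · rfl
    · simp
  rw [Finset.sum_congr rfl (fun g1 _ => hpull g1)]
  rw [Finset.sum_ite_eq' Finset.univ (fun s : Fin (t+1) => f s.1)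
    (fun g1 => ∑ g2 : Fin (t+1) → Ωt, cylW Pc (x0, y0) t (fun s => (g1 s, g2 s)))]
  simp only [Finset.mem_univ, if_true]
  exact margSum_fst Pc x0 y0 P1 hm f t

lemma muP_marg_snd (Pc : (Ωt × Ωt) → (Ωt × Ωt) → ℝ)
    (h0 : ∀ x y, 0 ≤ Pc x y) (h1 : ∀ x, ∑ y, Pc x y = 1)
    (P2 : Ωt → Ωt → ℝ) (hm : ∀ (z : Ωt × Ωt) (τ : Ωt), ∑ y, Pc z (y, τ) = P2 z.2 τ)
    (x0 y0 : Ωt) (f : ℕ → Ωt) (t : ℕ) :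
    (muP Pc (x0, y0) {ω | ∀ s ≤ t, (ω s).2 = f s}).toReal =
      if f 0 = y0 then ∏ s ∈ Finset.range t, P2 (f s) (f (s+1)) else 0 := by
  classical
  rw [muP_horizon Pc h0 h1 (x0, y0) t (fun ω => ∀ s ≤ t, (ω s).2 = f s)
    (fun ω ω' hag h => by
      intro s hs
      rw [← hag s hs]
      exact h s hs)]
  have hcond : ∀ h : Fin (t+1) → Ωt × Ωt,
      (∀ s ≤ t, (extendPath (x0, y0) t h s).2 = f s) ↔
        (∀ s : Fin (t+1), (h s).2 = f s.1) := by
    intro h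
    constructor
    · intro hc s
      have := hc s.1 (Nat.lt_succ_iff.1 s.2)
      rw [extendPath, dif_pos s.2] at this
      exact this
    · intro hc s hs
      rw [extendPath, dif_pos (Nat.lt_succ_of_le hs)]
      exact hc ⟨s, Nat.lt_succ_of_le hs⟩
  rw [Finset.sum_congr rfl (fun h _ => if_congr (hcond h) rfl rfl)]
  have hre : (∑ h : Fin (t+1) → Ωt × Ωt,
      if ∀ s : Fin (t+1), (h s).2 = f s.1 then cylW Pc (x0, y0) t h else 0) =
      ∑ q : (Fin (t+1) → Ωt) × (Fin (t+1) → Ωt),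
        (if (∀ s : Fin (t+1), q.2 s = f s.1) then
          cylW Pc (x0, y0) t (fun s => (q.1 s, q.2 s)) else 0) :=
    Fintype.sum_equiv (Equiv.arrowProdEquivProdArrow (Fin (t+1)) (fun _ => Ωt) (fun _ => Ωt)) _ _ (fun h => rfl)
  rw [hre, Fintype.sum_prod_type]
  have hpull : ∀ g2 : Fin (t+1) → Ωt,
      (∑ g1 : Fin (t+1) → Ωt, if (∀ s : Fin (t+1), g2 s = f s.1) then
        cylW Pc (x0, y0) t (fun s => (g1 s, g2 s)) else 0) =
      if g2 = (fun s : Fin (t+1) => f s.1) then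
        (∑ g1 : Fin (t+1) → Ωt, cylW Pc (x0, y0) t (fun s => (g1 s, g2 s))) else 0 := by
    intro g2
    have hiff : (∀ s : Fin (t+1), g2 s = f s.1) ↔ (g2 = fun s : Fin (t+1) => f s.1) :=
      funext_iff.symm
    rw [Finset.sum_congr rfl (fun g1 _ => if_congr hiff rfl rfl)]
    split
    · rfl
    · simp
  rw [Finset.sum_comm]
  rw [Finset.sum_congr rfl (fun g2 _ => hpull g2)]
  rw [Finset.sum_ite_eq' Finset.univ (fun s : Fin (t+1) => f s.1)
    (fun g2 => ∑ g1 : Fin (t+1) → Ωt, cylW Pc (x0, y0) t (fun s => (g1 s, g2 s)))]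
  simp only [Finset.mem_univ, if_true]
  exact margSum_snd Pc x0 y0 P2 hm f t

end PairMeas

/-- for any two starting configurations there is a coupling of the
Glauber dynamics whose vector of expected block Hamming distances contracts,
componentwise, like `A^t` applied to the initial distance vector. -/
theorem coupling_contraction_matrix
    (m : ℕ) (p : Fin m → ℝ) (k : Fin m → Fin m → ℝ)
    (hP : Params m p k)
    (β : ℝ) (hβ : 0 ≤ β)
    (n : ℕ) (hn : 0 < n) (g : Fin n → Fin m) (hg : IsPartition n p g)
    (A : Matrix (Fin m) (Fin m) ℝ)
    (hA : ∀ i j, A i j =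
      if i = j then 1 - 1 / (n : ℝ) + β * (k i i / n) * (p i - 1 / n)
      else β * p i * k i j / n)
    (σ0 σ0' : Fin n → Bool) :
    ∃ μ : Measure (ℕ → (Fin n → Bool) × (Fin n → Bool)),
      IsCoupling (glauber n β k g) σ0 σ0' μ ∧
      ∀ t : ℕ, ∀ i : Fin m,
        (∫ ω, blockDist n g (ω t).1 (ω t).2 i ∂μ) ≤
          (A ^ t).mulVec (fun j => blockDist n g σ0 σ0' j) i := by
  classical
  obtain ⟨hm0, hp, hpsum, hk, hksymm⟩ := hP
  have hgcard := hg.2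
  have h0 : ∀ x y : (Fin n → Bool) × (Fin n → Bool), 0 ≤ cpl n β k g x y :=
    cpl_nonneg n β k g
  have h1 : ∀ x, ∑ y, cpl n β k g x y = 1 := cpl_rowsum n β k g hn
  have hnpos : (0:ℝ) < n := Nat.cast_pos.2 hn
  have hn1 : (1:ℝ) ≤ n := by exact_mod_cast hn
  refine ⟨muP (cpl n β k g) (σ0, σ0'), ⟨isProb_muP _ _, ?_, ?_⟩, ?_⟩
  · intro t f
    exact muP_marg_fst (cpl n β k g) h0 h1 (glauber n β k g)
      (fun z τ => cpl_marg_fst n β k g z τ) σ0 σ0' f t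
  · intro t f
    exact muP_marg_snd (cpl n β k g) h0 h1 (glauber n β k g)
      (fun z τ => cpl_marg_snd n β k g z τ) σ0 σ0' f t
  · haveI := isProb_muP (cpl n β k g) (σ0, σ0')
    have hInt : ∀ (t : ℕ) (i : Fin m),
        (∫ ω, blockDist n g (ω t).1 (ω t).2 i ∂(muP (cpl n β k g) (σ0, σ0'))) =
        ∑ x, Wmass (cpl n β k g) (σ0, σ0') t x * blockDist n g x.1 x.2 i := by
      intro t i
      have h := integral_comp_eval (muP (cpl n β k g) (σ0, σ0')) t
        (fun x : (Fin n → Bool) × (Fin n → Bool) => blockDist n g x.1 x.2 i)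
      rw [show (∫ ω, blockDist n g (ω t).1 (ω t).2 i ∂(muP (cpl n β k g) (σ0, σ0'))) =
        ∫ ω, (fun x : (Fin n → Bool) × (Fin n → Bool) => blockDist n g x.1 x.2 i) (ω t)
          ∂(muP (cpl n β k g) (σ0, σ0')) from rfl, h]
      exact Finset.sum_congr rfl fun x _ => by
        rw [muP_point (cpl n β k g) h0 h1 (σ0, σ0') t x]
    have hcard1 : ∀ i, (1:ℝ) ≤ n * p i := by
      intro i
      rw [← hgcard i]
      have hne : (Finset.univ.filter fun v => g v = i).card ≠ 0 := by
        intro hc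
        have h' := hgcard i
        rw [hc] at h'
        have : (0:ℝ) < n * p i := mul_pos hnpos (hp i)
        simp only [Nat.cast_zero] at h'
        linarith
      exact_mod_cast Nat.one_le_iff_ne_zero.2 hne
    have hAnn : ∀ i j, 0 ≤ A i j := by
      intro i j
      rw [hA i j]
      split
      · have hpi : 1/(n:ℝ) ≤ p i := by
          rw [div_le_iff₀ hnpos]
          have := hcard1 i
          linarith
        have h1n : 1/(n:ℝ) ≤ 1 := by
          rw [div_le_one hnpos]; exact hn1
        have hnn : 0 ≤ β * (k i i / n) * (p i - 1/n) :=
          mul_nonneg (mul_nonneg hβ (div_nonneg (hk i i).le (Nat.cast_nonneg n)))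
            (by linarith)
        linarith
      · have h2 := hp i
        have h3 := hk i j
        positivity
    have dnn : ∀ (x : (Fin n → Bool) × (Fin n → Bool)) (j : Fin m),
        0 ≤ blockDist n g x.1 x.2 j := by
      intro x j
      rw [blockDist]
      apply mul_nonneg (by norm_num)
      exact Finset.sum_nonneg fun w _ => abs_nonneg _
    have key : ∀ t : ℕ, ∀ i : Fin m,
        (∑ x, Wmass (cpl n β k g) (σ0, σ0') t x * blockDist n g x.1 x.2 i) ≤
          (A ^ t).mulVec (fun j => blockDist n g σ0 σ0' j) i := by
      intro t
      induction t with
      | zero =>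
          intro i
          rw [pow_zero, Matrix.one_mulVec]
          have hterm : ∀ x : (Fin n → Bool) × (Fin n → Bool),
              Wmass (cpl n β k g) (σ0, σ0') 0 x * blockDist n g x.1 x.2 i =
              if x = (σ0, σ0') then blockDist n g x.1 x.2 i else 0 := by
            intro x
            rw [Wmass_zero]
            split <;> simp
          rw [Finset.sum_congr rfl fun x _ => hterm x,
            Finset.sum_ite_eq' Finset.univ (σ0, σ0')
              (fun x => blockDist n g x.1 x.2 i)]
          simp
      | succ t ih =>
          intro i
          calc ∑ x, Wmass (cpl n β k g) (σ0, σ0') (t+1) x * blockDist n g x.1 x.2 i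
              = ∑ x, (∑ z, Wmass (cpl n β k g) (σ0, σ0') t z * cpl n β k g z x) *
                  blockDist n g x.1 x.2 i := by
                exact Finset.sum_congr rfl fun x _ => by rw [Wmass_succ]
            _ = ∑ z, Wmass (cpl n β k g) (σ0, σ0') t z *
                  (∑ x, cpl n β k g z x * blockDist n g x.1 x.2 i) := by
                simp_rw [Finset.sum_mul, mul_assoc]
                rw [Finset.sum_comm]
                exact Finset.sum_congr rfl fun z _ => (Finset.mul_sum _ _ _).symm
            _ ≤ ∑ z, Wmass (cpl n β k g) (σ0, σ0') t z *
                  (∑ j, A i j * blockDist n g z.1 z.2 j) := by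
                apply Finset.sum_le_sum
                intro z _
                exact mul_le_mul_of_nonneg_left
                  (cpl_drift n β k g hβ hn p hgcard hk A hA z i)
                  (Wmass_nonneg (cpl n β k g) (σ0, σ0') h0 t z)
            _ = ∑ j, A i j * (∑ z, Wmass (cpl n β k g) (σ0, σ0') t z *
                  blockDist n g z.1 z.2 j) := by
                simp_rw [Finset.mul_sum]
                rw [Finset.sum_comm]
                exact Finset.sum_congr rfl fun j _ => Finset.sum_congr rfl fun z _ => by ring
            _ ≤ ∑ j, A i j * ((A ^ t).mulVec (fun j => blockDist n g σ0 σ0' j) j) := by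
                apply Finset.sum_le_sum
                intro j _
                exact mul_le_mul_of_nonneg_left (ih j) (hAnn i j)
            _ = (A ^ (t+1)).mulVec (fun j => blockDist n g σ0 σ0' j) i := by
                rw [pow_succ', ← Matrix.mulVec_mulVec]
                simp [Matrix.mulVec, dotProduct]
    intro t i
    rw [hInt t i]
    exact key t i


end MultiIsing
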